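/- Let G' be the directed graph obtained from the symmetric odd cycle on 2k+1 vertices by removing the single arrow (2,1). Then every arrow of G' lies in a directed cycle, and P_{G'} is unimodularly equivalent to the pseudo del Pezzo polytope conv{±e_1,...,±e_{2k}, e_1+...+e_{2k}} ⊂ ℝ^{2k}. -/

import Mathlib

open Finset

/-- `ρ(e) = e_{i} - e_{j}` for an arrow `e = (i,j)`. -/
def rho {V : Type*} [DecidableEq V] (e : V × V) : V → ℝ :=
  fun k => (if k = e.1 then (1 : ℝ) else 0) - (if k = e.2 then (1 : ℝ) else 0)

/-- The polytope `P_G` associated with the arrow set `A` of a directed graph. -/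
def polyG {V : Type*} [DecidableEq V] (A : Finset (V × V)) : Set (V → ℝ) :=
  convexHull ℝ (rho '' (A : Set (V × V)))

/-- Connectivity of the underlying undirected graph of the directed graph with arrow set `A`. -/
def GConnected {V : Type*} [DecidableEq V] (A : Finset (V × V)) : Prop :=
  (SimpleGraph.fromRel (fun i j => (i, j) ∈ A)).Connected

/-- Cyclic successor on `Fin l`. -/
def succAt {l : ℕ} (h : 0 < l) (j : Fin l) : Fin l :=
  ⟨((j : ℕ) + 1) % l, Nat.mod_lt _ h⟩

/-- The data of a cycle in a directed graph on the vertex set `V`: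
a list of at least two distinct vertices, cyclically ordered, together with, for each
edge of the cycle, a choice of direction (`ε j = true` means the arrow points forwards). -/
structure PreCycle (V : Type*) where
  l : ℕ
  two_le : 2 ≤ l
  v : Fin l → V
  ε : Fin l → Bool
  inj : Function.Injective v

namespace PreCycle

variable {V : Type*}

theorem pos (C : PreCycle V) : 0 < C.l :=
  lt_of_lt_of_le Nat.zero_lt_two C.two_le

/-- The cyclically next index. -/
def nxt (C : PreCycle V) (j : Fin C.l) : Fin C.l := succAt C.pos j

/-- The arrow of the cycle corresponding to its `j`-th edge. -/
def arrow (C : PreCycle V) (j : Fin C.l) : V × V :=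
  if C.ε j then (C.v j, C.v (C.nxt j)) else (C.v (C.nxt j), C.v j)

/-- `C` is a cycle in the directed graph with arrow set `A`. -/
def IsCycleIn [DecidableEq V] (C : PreCycle V) (A : Finset (V × V)) : Prop :=
  (∀ j, C.arrow j ∈ A) ∧ Function.Injective C.arrow

/-- A cycle is homogeneous if it has as many forward arrows as backward arrows. -/
def Homogeneous (C : PreCycle V) : Prop :=
  2 * (Finset.univ.filter fun j => C.ε j = true).card = C.l

/-- A directed cycle: all arrows point in the direction of traversal. -/
def IsDirected (C : PreCycle V) : Prop := ∀ j, C.ε j = true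

/-- The defining property of the function `μ_C` attached to a homogeneous cycle `C`
(here recorded as a function of the position along the cycle; since the vertices of the
cycle are distinct this is the same as a function on the cycle vertices):
it is nonnegative, decreases by `1` along forward arrows, increases by `1` along
backward arrows, and has minimum value `0`. -/
def IsMu (C : PreCycle V) (μ : Fin C.l → ℤ) : Prop :=
  (∀ j, 0 ≤ μ j) ∧ (∀ j, μ (C.nxt j) = if C.ε j then μ j - 1 else μ j + 1) ∧ (∃ j, μ j = 0)

end PreCycle

/-- Every arrow of the directed graph with arrow set `A` lies in a directed cycle. -/
def EveryArrowInDirCycle {V : Type*} [DecidableEq V] (A : Finset (V × V)) : Prop :=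
  ∀ e ∈ A, ∃ C : PreCycle V, C.IsCycleIn A ∧ C.IsDirected ∧ ∃ j, C.arrow j = e

/-- The dimension of a subset of `ℝ^V` (the dimension of its affine hull). -/
noncomputable def pdim {V : Type*} (s : Set (V → ℝ)) : ℕ :=
  Module.finrank ℝ (vectorSpan ℝ s)

/-- `F` is a facet of the polytope `P`: a nonempty exposed face of codimension one. -/
def IsFacetOf {V : Type*} (F P : Set (V → ℝ)) : Prop :=
  IsExposed ℝ P F ∧ F.Nonempty ∧ pdim F + 1 = pdim P

/-- A polytope is simplicial if the vertices of every facet are affinely independent. -/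
def Simplicial {V : Type*} (P : Set (V → ℝ)) : Prop :=
  ∀ F : Set (V → ℝ), IsFacetOf F P →
    AffineIndependent ℝ (fun x : (F.extremePoints ℝ) => (x : V → ℝ))

/-- The lattice `ℤ^V ∩ {x : Σ x_i = 0}`, as a subset of `ℝ^V`. -/
def latticeSet (V : Type*) [Fintype V] : Set (V → ℝ) :=
  {x | (∀ i, ∃ z : ℤ, x i = (z : ℝ)) ∧ ∑ i, x i = 0}

/-- The set of integer points of `ℝ^V`. -/
def intLat (V : Type*) : Set (V → ℝ) :=
  {x | ∀ i, ∃ z : ℤ, x i = (z : ℝ)}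

/-- `W` is a `ℤ`-basis of (the additive group generated by) `L`. -/
def IsZBasisOf {V : Type*} (W L : Set (V → ℝ)) : Prop :=
  W ⊆ L ∧ LinearIndependent ℤ (fun x : W => (x : V → ℝ)) ∧
    L ⊆ (Submodule.span ℤ W : Set (V → ℝ))

/-- There is a directed path of length `n` from `i` to `j` in the directed graph `A`. -/
def HasDPath {V : Type*} (A : Finset (V × V)) (i j : V) (n : ℕ) : Prop :=
  ∃ f : Fin (n + 1) → V, f 0 = i ∧ f (Fin.last n) = j ∧
    ∀ k : Fin n, (f k.castSucc, f k.succ) ∈ A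

/-- The underlying undirected graph of `A` contains an even cycle. -/
def HasEvenCycle {V : Type*} [DecidableEq V] (A : Finset (V × V)) : Prop :=
  ∃ C : PreCycle V, 3 ≤ C.l ∧ Even C.l ∧
    ∀ j, (C.v j, C.v (C.nxt j)) ∈ A ∨ (C.v (C.nxt j), C.v j) ∈ A

/-- The symmetric directed cycle on `m` vertices: arrows `(i, i+1)` and `(i+1, i)`
for all `i`, cyclically. -/
def symCyc (m : ℕ) [NeZero m] : Finset (Fin m × Fin m) :=
  (Finset.univ.image fun i : Fin m => (i, i + 1)) ∪
    (Finset.univ.image fun i : Fin m => (i + 1, i))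

/-- The vertex set of the del Pezzo polytope `conv{±e_1, …, ±e_n, ±(e_1 + ⋯ + e_n)}`. -/
def delPezzoVerts (n : ℕ) : Set (Fin n → ℝ) :=
  {x | (∃ i, x = Pi.single i (1 : ℝ)) ∨ (∃ i, x = Pi.single i (-1 : ℝ)) ∨
    x = (fun _ => 1) ∨ x = (fun _ => -1)}

/-- The vertex set of the pseudo del Pezzo polytope
`conv{±e_1, …, ±e_n, e_1 + ⋯ + e_n}`. -/
def pseudoDelPezzoVerts (n : ℕ) : Set (Fin n → ℝ) :=
  {x | (∃ i, x = Pi.single i (1 : ℝ)) ∨ (∃ i, x = Pi.single i (-1 : ℝ)) ∨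
    x = (fun _ => 1)}

namespace Stmt16Aux

open Finset
open Fin.NatCast

/-- The unimodular transformation. -/
def Tmap (k : ℕ) : (Fin (2 * k + 1) → ℝ) →ₗ[ℝ] (Fin (2 * k) → ℝ) where
  toFun x := fun j => -∑ i ∈ Finset.Icc 1 ((j : ℕ) + 1), x (i : Fin (2 * k + 1))
  map_add' x y := by
    funext j
    simp [Finset.sum_add_distrib]
    ring
  map_smul' c x := by
    funext j
    simp [Finset.mul_sum]

lemma Tmap_apply {k : ℕ} (x : Fin (2 * k + 1) → ℝ) (j : Fin (2 * k)) :
    Tmap k x j = -∑ i ∈ Finset.Icc 1 ((j : ℕ) + 1), x (i : Fin (2 * k + 1)) := rfl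

lemma Tmap_rho {k : ℕ} (a b : Fin (2 * k + 1)) (j : Fin (2 * k)) :
    Tmap k (rho (a, b)) j =
      (if 1 ≤ (b : ℕ) ∧ (b : ℕ) ≤ (j : ℕ) + 1 then (1 : ℝ) else 0)
      - (if 1 ≤ (a : ℕ) ∧ (a : ℕ) ≤ (j : ℕ) + 1 then (1 : ℝ) else 0) := by
  have key : ∀ c : Fin (2 * k + 1),
      ∑ i ∈ Finset.Icc 1 ((j : ℕ) + 1), (if (i : Fin (2 * k + 1)) = c then (1 : ℝ) else 0)
        = if 1 ≤ (c : ℕ) ∧ (c : ℕ) ≤ (j : ℕ) + 1 then 1 else 0 := by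
    intro c
    have h1 : ∀ i ∈ Finset.Icc 1 ((j : ℕ) + 1),
        (if (i : Fin (2 * k + 1)) = c then (1 : ℝ) else 0)
          = if i = (c : ℕ) then 1 else 0 := by
      intro i hi
      simp only [Finset.mem_Icc] at hi
      have hj : (j : ℕ) + 1 < 2 * k + 1 := by omega
      simp only [Fin.ext_iff, Fin.val_cast_of_lt (show i < 2 * k + 1 by omega)]
    rw [Finset.sum_congr rfl h1,
      Finset.sum_ite_eq' (Finset.Icc 1 ((j : ℕ) + 1)) (c : ℕ) (fun _ => (1 : ℝ))]
    simp [Finset.mem_Icc]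
  rw [Tmap_apply]
  simp only [rho]
  rw [Finset.sum_sub_distrib, key a, key b]
  ring

end Stmt16Aux
namespace Stmt16Aux

lemma val_one {k : ℕ} (hk : 1 ≤ k) : ((1 : Fin (2 * k + 1)) : ℕ) = 1 := by
  rw [Fin.val_one']; exact Nat.mod_eq_of_lt (by omega)

lemma Tmap_rho_zero {k : ℕ} (hk : 1 ≤ k) :
    Tmap k (rho ((0 : Fin (2 * k + 1)), 1)) = fun _ => (1 : ℝ) := by
  funext j
  rw [Tmap_rho, val_one hk]
  have : ((0 : Fin (2 * k + 1)) : ℕ) = 0 := rfl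
  rw [this]
  split_ifs <;> first | (exfalso; omega) | norm_num

lemma Tmap_rho_fwd {k : ℕ} (a : Fin (2 * k + 1)) (ha : 1 ≤ (a : ℕ)) :
    Tmap k (rho (a, a + 1)) =
      Pi.single (⟨(a : ℕ) - 1, by omega⟩ : Fin (2 * k)) (-1 : ℝ) := by
  funext j
  rw [Tmap_rho]
  have hk : 1 ≤ k := by have := a.isLt; omega
  have hb : ((a + 1 : Fin (2 * k + 1)) : ℕ) = ((a : ℕ) + 1) % (2 * k + 1) := by
    rw [Fin.add_def, val_one hk]
  rw [hb, Pi.single_apply]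
  simp only [Fin.ext_iff]
  have hj := j.isLt
  by_cases hc : (a : ℕ) = 2 * k
  · rw [hc, Nat.mod_self]
    split_ifs <;> first | (exfalso; omega) | norm_num
  · have hlt : (a : ℕ) + 1 < 2 * k + 1 := by have := a.isLt; omega
    rw [Nat.mod_eq_of_lt hlt]
    split_ifs <;> first | (exfalso; omega) | norm_num

lemma rho_swap {V : Type*} [DecidableEq V] (a b : V) : rho (b, a) = -rho (a, b) := by
  funext t
  simp only [rho, Pi.neg_apply]
  ring

lemma Tmap_rho_bwd {k : ℕ} (a : Fin (2 * k + 1)) (ha : 1 ≤ (a : ℕ)) :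
    Tmap k (rho (a + 1, a)) =
      Pi.single (⟨(a : ℕ) - 1, by omega⟩ : Fin (2 * k)) (1 : ℝ) := by
  rw [rho_swap, map_neg, Tmap_rho_fwd a ha, ← Pi.single_neg, neg_neg]

end Stmt16Aux
namespace Stmt16Aux

lemma mem_A_iff {m : ℕ} [NeZero m] (a b : Fin m) :
    (a, b) ∈ (symCyc m).erase (1, 0) ↔
      (a, b) ≠ ((1 : Fin m), (0 : Fin m)) ∧ (b = a + 1 ∨ a = b + 1) := by
  rw [Finset.mem_erase]
  refine and_congr_right fun _ => ?_
  rw [symCyc, Finset.mem_union]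
  constructor
  · rintro (h | h) <;> obtain ⟨i, -, hi⟩ := Finset.mem_image.mp h
    · injection hi with h1 h2; left; rw [← h1, ← h2]
    · injection hi with h1 h2; right; rw [← h1, ← h2]
  · rintro (h | h)
    · exact Or.inl (Finset.mem_image.mpr ⟨a, Finset.mem_univ a, by rw [h]⟩)
    · exact Or.inr (Finset.mem_image.mpr ⟨b, Finset.mem_univ b, by rw [h]⟩)

lemma two_ne_zero' {k : ℕ} (hk : 1 ≤ k) : ((1 : Fin (2 * k + 1)) + 1) ≠ 0 := by
  have hv : ((1 + 1 : Fin (2 * k + 1)) : ℕ) = 2 := by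
    rw [Fin.add_def, val_one hk]
    exact Nat.mod_eq_of_lt (by omega)
  intro h
  rw [h] at hv
  simp at hv

lemma succ_ne_self {k : ℕ} (hk : 1 ≤ k) (a : Fin (2 * k + 1)) : a + 1 ≠ a := by
  intro h
  have h1 : (1 : Fin (2 * k + 1)) = 0 := add_eq_left.mp h
  have := congrArg Fin.val h1
  rw [val_one hk] at this
  simp at this

lemma image_verts {k : ℕ} (hk : 1 ≤ k) :
    (Tmap k) '' (rho '' (((symCyc (2 * k + 1)).erase
        ((1 : Fin (2 * k + 1)), (0 : Fin (2 * k + 1)))) : Set (Fin (2 * k + 1) × Fin (2 * k + 1))))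
      = pseudoDelPezzoVerts (2 * k) := by
  ext x
  constructor
  · rintro ⟨_, ⟨⟨a, b⟩, hab, rfl⟩, rfl⟩
    rw [Finset.mem_coe, mem_A_iff] at hab
    obtain ⟨hne, hd | hd⟩ := hab
    · subst hd
      by_cases ha : (a : ℕ) = 0
      · have ha0 : a = 0 := Fin.ext ha
        subst ha0
        rw [zero_add, Tmap_rho_zero hk]
        exact Or.inr (Or.inr rfl)
      · rw [Tmap_rho_fwd a (by omega)]
        exact Or.inr (Or.inl ⟨_, rfl⟩)
    · subst hd
      have hb : 1 ≤ (b : ℕ) := by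
        by_contra h
        have hb0 : b = 0 := Fin.ext (show (b : ℕ) = 0 by omega)
        subst hb0
        exact hne (by rw [zero_add])
      rw [Tmap_rho_bwd b hb]
      exact Or.inl ⟨_, rfl⟩
  · intro hx
    rcases hx with ⟨t, rfl⟩ | ⟨t, rfl⟩ | rfl
    · -- Pi.single t 1 : backward arrow (a+1, a), a.val = t.val + 1
      set a : Fin (2 * k + 1) := ⟨(t : ℕ) + 1, by have := t.isLt; omega⟩ with ha
      refine ⟨rho (a + 1, a), ⟨(a + 1, a), ?_, rfl⟩, ?_⟩
      · rw [Finset.mem_coe, mem_A_iff]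
        refine ⟨?_, Or.inr rfl⟩
        intro h
        injection h with h1 h2
        have := congrArg Fin.val h2
        simp [ha] at this
      · rw [Tmap_rho_bwd a (by simp [ha])]
        congr 1
    · -- Pi.single t (-1) : forward arrow (a, a+1), a.val = t.val + 1
      set a : Fin (2 * k + 1) := ⟨(t : ℕ) + 1, by have := t.isLt; omega⟩ with ha
      refine ⟨rho (a, a + 1), ⟨(a, a + 1), ?_, rfl⟩, ?_⟩
      · rw [Finset.mem_coe, mem_A_iff]
        refine ⟨?_, Or.inl rfl⟩
        intro h
        injection h with h1 h2
        rw [h1] at h2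
        exact two_ne_zero' hk h2
      · rw [Tmap_rho_fwd a (by simp [ha])]
        congr 1
    · refine ⟨rho (0, 1), ⟨((0 : Fin (2 * k + 1)), (1 : Fin (2 * k + 1))), ?_, rfl⟩, ?_⟩
      · rw [Finset.mem_coe, mem_A_iff]
        constructor
        · intro h
          injection h with h1 h2
          have := congrArg Fin.val h1
          rw [val_one hk] at this
          simp at this
        · left; rw [zero_add]
      · exact Tmap_rho_zero hk

end Stmt16Aux
namespace Stmt16Aux

open Finset
open Fin.NatCast

lemma Icc_succ_insert (t : ℕ) (ht : 1 ≤ t) :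
    Finset.Icc 1 t = insert t (Finset.Icc 1 (t - 1)) := by
  ext i
  simp only [Finset.mem_Icc, Finset.mem_insert]
  omega

lemma not_mem_Icc_pred (t : ℕ) : t ∉ Finset.Icc 1 (t - 1) := by
  simp only [Finset.mem_Icc]
  omega

lemma sum_decomp {k : ℕ} (f : Fin (2 * k + 1) → ℝ) :
    ∑ i, f i = f 0 + ∑ t ∈ Finset.Icc 1 (2 * k), f (t : Fin (2 * k + 1)) := by
  have h1 : ∑ i, f i = ∑ t ∈ Finset.range (2 * k + 1), f (t : Fin (2 * k + 1)) := by
    rw [← Fin.sum_univ_eq_sum_range (fun t => f (t : Fin (2 * k + 1))) (2 * k + 1)]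
    exact Finset.sum_congr rfl fun i _ => by rw [Fin.cast_val_eq_self]
  rw [h1]
  have h2 : Finset.range (2 * k + 1) = insert 0 (Finset.Icc 1 (2 * k)) := by
    ext i
    simp only [Finset.mem_range, Finset.mem_insert, Finset.mem_Icc]
    omega
  rw [h2, Finset.sum_insert (by simp)]
  norm_num

lemma Tmap_injOn (k : ℕ) :
    Set.InjOn (Tmap k) (latticeSet (Fin (2 * k + 1))) := by
  intro x hx y hy hxy
  have hsum : ∀ t, t ≤ 2 * k →
      ∑ i ∈ Finset.Icc 1 t, x (i : Fin (2 * k + 1))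
        = ∑ i ∈ Finset.Icc 1 t, y (i : Fin (2 * k + 1)) := by
    intro t ht
    rcases Nat.eq_zero_or_pos t with rfl | htpos
    · simp
    · have hj : t - 1 < 2 * k := by omega
      have h := congrFun hxy (⟨t - 1, hj⟩ : Fin (2 * k))
      rw [Tmap_apply, Tmap_apply] at h
      have hval : ((⟨t - 1, hj⟩ : Fin (2 * k)) : ℕ) + 1 = t := by
        show t - 1 + 1 = t
        omega
      rw [hval] at h
      linarith [neg_injective h]
  have hcoord : ∀ t : ℕ, 1 ≤ t → t ≤ 2 * k →
      x (t : Fin (2 * k + 1)) = y (t : Fin (2 * k + 1)) := by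
    intro t h1 h2
    have hA := hsum t h2
    have hB := hsum (t - 1) (by omega)
    rw [Icc_succ_insert t h1, Finset.sum_insert (not_mem_Icc_pred t),
      Finset.sum_insert (not_mem_Icc_pred t)] at hA
    linarith
  funext i
  by_cases hi : (i : ℕ) = 0
  · have hi0 : i = 0 := Fin.ext hi
    subst hi0
    have hxs := hx.2
    have hys := hy.2
    rw [sum_decomp x] at hxs
    rw [sum_decomp y] at hys
    have := hsum (2 * k) le_rfl
    linarith
  · have : i = (((i : ℕ) : Fin (2 * k + 1))) := by rw [Fin.cast_val_eq_self]
    rw [this]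
    exact hcoord (i : ℕ) (by omega) (by have := i.isLt; omega)

lemma Tmap_mapsTo (k : ℕ) :
    Set.MapsTo (Tmap k) (latticeSet (Fin (2 * k + 1))) (intLat (Fin (2 * k))) := by
  intro x hx
  obtain ⟨h1, -⟩ := hx
  choose z hz using h1
  intro j
  refine ⟨-∑ i ∈ Finset.Icc 1 ((j : ℕ) + 1), z (i : Fin (2 * k + 1)), ?_⟩
  have h : ∑ i ∈ Finset.Icc 1 ((j : ℕ) + 1), x (i : Fin (2 * k + 1))
      = ∑ i ∈ Finset.Icc 1 ((j : ℕ) + 1), ((z (i : Fin (2 * k + 1)) : ℝ)) :=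
    Finset.sum_congr rfl fun i _ => hz _
  rw [Tmap_apply, h]
  push_cast
  ring

/-- The preimage of an integer vector under `Tmap`. -/
def preim (k : ℕ) (hk : 1 ≤ k) (w : Fin (2 * k) → ℤ) : Fin (2 * k + 1) → ℝ := fun i =>
  ((if (i : ℕ) = 0 then w ⟨2 * k - 1, by omega⟩
    else if (i : ℕ) = 1 then -w ⟨0, by omega⟩
    else w ⟨(i : ℕ) - 2, by have := i.isLt; omega⟩
      - w ⟨(i : ℕ) - 1, by have := i.isLt; omega⟩ : ℤ) : ℝ)

lemma Tmap_surjOn {k : ℕ} (hk : 1 ≤ k) :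
    Set.SurjOn (Tmap k) (latticeSet (Fin (2 * k + 1))) (intLat (Fin (2 * k))) := by
  intro y hy
  choose w hw using hy
  have hval : ∀ t : ℕ, t ≤ 2 * k → ((t : Fin (2 * k + 1)) : ℕ) = t :=
    fun t ht => Fin.val_cast_of_lt (by omega)
  have claim : ∀ t : ℕ, 1 ≤ t → ∀ ht : t ≤ 2 * k,
      ∑ i ∈ Finset.Icc 1 t, preim k hk w (i : Fin (2 * k + 1))
        = -(w ⟨t - 1, by omega⟩ : ℝ) := by
    intro t h1 h2
    induction t with
    | zero => omega
    | succ s ih =>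
      rcases Nat.eq_zero_or_pos s with rfl | hs
      · rw [show Finset.Icc 1 1 = {1} from Finset.Icc_self 1, Finset.sum_singleton]
        simp only [preim, hval 1 (by omega)]
        norm_num
      · rw [Icc_succ_insert (s + 1) (by omega), Finset.sum_insert (not_mem_Icc_pred _)]
        have hih := ih (by omega) (by omega)
        simp only [Nat.add_sub_cancel] at hih ⊢
        rw [hih]
        simp only [preim, hval (s + 1) h2]
        rw [if_neg (by omega : ¬ (s + 1 = 0)), if_neg (by omega : ¬ (s + 1 = 1))]
        have he1 : s + 1 - 2 = s - 1 := by omega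
        have he2 : s + 1 - 1 = s := by omega
        simp only [he1, he2]
        push_cast
        ring
  have hxlat : preim k hk w ∈ latticeSet (Fin (2 * k + 1)) := by
    constructor
    · intro i
      exact ⟨_, rfl⟩
    · rw [sum_decomp (preim k hk w)]
      have h0 : preim k hk w 0 = (w ⟨2 * k - 1, by omega⟩ : ℝ) := by
        simp only [preim]
        norm_num
      rw [h0, claim (2 * k) (by omega) le_rfl]
      ring
  refine ⟨preim k hk w, hxlat, ?_⟩
  funext j
  rw [Tmap_apply, claim ((j : ℕ) + 1) (by omega) (by have := j.isLt; omega)]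
  rw [neg_neg]
  have heq : (⟨(j : ℕ) + 1 - 1, by have := j.isLt; omega⟩ : Fin (2 * k)) = j := rfl
  rw [heq, ← hw j]

end Stmt16Aux
namespace Stmt16Aux

/-- The 2-cycle through distinct vertices `a` and `b`. -/
def twoCycle {V : Type*} (a b : V) (hab : a ≠ b) : PreCycle V where
  l := 2
  two_le := le_refl 2
  v := fun j => if (j : ℕ) = 0 then a else b
  ε := fun _ => true
  inj := by
    intro i j h
    dsimp only at h
    have hi : (i : ℕ) < 2 := i.isLt
    have hj : (j : ℕ) < 2 := j.isLt
    by_cases h1 : (i : ℕ) = 0 <;> by_cases h2 : (j : ℕ) = 0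
    · exact Fin.ext (by omega)
    · rw [if_pos h1, if_neg h2] at h; exact absurd h hab
    · rw [if_neg h1, if_pos h2] at h; exact absurd h.symm hab
    · exact Fin.ext (by omega)

lemma twoCycle_arrow_eq {V : Type*} (a b : V) (hab : a ≠ b)
    (j : Fin (twoCycle a b hab).l) :
    (twoCycle a b hab).arrow j = if (j : ℕ) = 0 then (a, b) else (b, a) := by
  rcases j with ⟨jv, hjv⟩
  have hjv2 : jv < 2 := hjv
  interval_cases jv
  · rfl
  · simp [twoCycle, PreCycle.arrow, PreCycle.nxt, succAt]

lemma twoCycle_inj {V : Type*} (a b : V) (hab : a ≠ b) :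
    Function.Injective (twoCycle a b hab).arrow := by
  intro j1 j2 h
  rw [twoCycle_arrow_eq, twoCycle_arrow_eq] at h
  have l1 : (j1 : ℕ) < 2 := j1.isLt
  have l2 : (j2 : ℕ) < 2 := j2.isLt
  by_cases h1 : (j1 : ℕ) = 0 <;> by_cases h2 : (j2 : ℕ) = 0
  · exact Fin.ext (by omega)
  · rw [if_pos h1, if_neg h2] at h
    injection h with ha hb
    exact absurd ha hab
  · rw [if_neg h1, if_pos h2] at h
    injection h with ha hb
    exact absurd ha.symm hab
  · exact Fin.ext (by omega)

/-- The full directed cycle on `Fin (2k+1)`. -/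
def bigCycle (k : ℕ) (hk : 1 ≤ k) : PreCycle (Fin (2 * k + 1)) where
  l := 2 * k + 1
  two_le := by omega
  v := id
  ε := fun _ => true
  inj := fun _ _ h => h

lemma bigCycle_arrow (k : ℕ) (hk : 1 ≤ k) (j : Fin (2 * k + 1)) :
    (bigCycle k hk).arrow j = (j, j + 1) := by
  have h1 : (bigCycle k hk).arrow j
      = (j, (⟨((j : ℕ) + 1) % (2 * k + 1), Nat.mod_lt _ (by omega)⟩ : Fin (2 * k + 1))) := rfl
  rw [h1]
  congr 1
  apply Fin.ext
  rw [Fin.add_def, Fin.val_one']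
  show ((j : ℕ) + 1) % (2 * k + 1) = ((j : ℕ) + 1 % (2 * k + 1)) % (2 * k + 1)
  rw [Nat.mod_eq_of_lt (show 1 < 2 * k + 1 by omega)]

theorem part1 {k : ℕ} (hk : 1 ≤ k) :
    EveryArrowInDirCycle
      ((symCyc (2 * k + 1)).erase ((1 : Fin (2 * k + 1)), (0 : Fin (2 * k + 1)))) := by
  intro e he
  obtain ⟨a, b⟩ := e
  rw [mem_A_iff] at he
  obtain ⟨hne, hd | hd⟩ := he
  · subst hd
    by_cases ha : a = 0
    · subst ha
      refine ⟨bigCycle k hk, ⟨?_, ?_⟩, fun j => rfl, ⟨(0 : Fin (2 * k + 1)), ?_⟩⟩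
      · intro j
        rw [bigCycle_arrow k hk j]; refine (mem_A_iff (m := 2 * k + 1) _ _).mpr ?_
        refine ⟨?_, Or.inl rfl⟩
        intro h
        injection h with h1 h2
        rw [h1] at h2
        exact two_ne_zero' hk h2
      · intro j1 j2 h
        rw [bigCycle_arrow k hk j1, bigCycle_arrow k hk j2] at h
        exact congrArg Prod.fst h
      · rw [bigCycle_arrow k hk]
    · have hane : a ≠ a + 1 := fun h => succ_ne_self hk a h.symm
      refine ⟨twoCycle a (a + 1) hane, ⟨?_, twoCycle_inj a (a + 1) hane⟩,
        fun j => rfl, ⟨⟨0, Nat.zero_lt_two⟩, by rw [twoCycle_arrow_eq]; rfl⟩⟩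
      intro j
      rw [twoCycle_arrow_eq]
      by_cases hj : (j : ℕ) = 0
      · rw [if_pos hj, mem_A_iff]
        exact ⟨hne, Or.inl rfl⟩
      · rw [if_neg hj, mem_A_iff]
        refine ⟨?_, Or.inr rfl⟩
        intro h
        injection h with h1 h2
        exact ha h2
  · subst hd
    have hbne : b + 1 ≠ b := succ_ne_self hk b
    refine ⟨twoCycle (b + 1) b hbne, ⟨?_, twoCycle_inj (b + 1) b hbne⟩,
      fun j => rfl, ⟨⟨0, Nat.zero_lt_two⟩, by rw [twoCycle_arrow_eq]; rfl⟩⟩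
    intro j
    rw [twoCycle_arrow_eq]
    by_cases hj : (j : ℕ) = 0
    · rw [if_pos hj, mem_A_iff]
      exact ⟨hne, Or.inr rfl⟩
    · rw [if_neg hj, mem_A_iff]
      refine ⟨?_, Or.inl rfl⟩
      intro h
      injection h with h1 h2
      rw [h1] at h2
      exact two_ne_zero' hk h2

end Stmt16Aux

/-- removing the single arrow `(2,1)` (here `(1,0)` in `Fin (2k+1)`) from
the symmetric odd cycle on `2k+1` vertices yields a directed graph `G'` in which every
arrow still lies in a directed cycle, and `P_{G'}` is unimodularly equivalent to the
pseudo del Pezzo polytope `conv{±e_1, …, ±e_{2k}, e_1 + ⋯ + e_{2k}}`. -/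
theorem stmt16 (k : ℕ) (hk : 1 ≤ k) :
    EveryArrowInDirCycle
      ((symCyc (2 * k + 1)).erase ((1 : Fin (2 * k + 1)), (0 : Fin (2 * k + 1)))) ∧
    ∃ T : (Fin (2 * k + 1) → ℝ) →ₗ[ℝ] (Fin (2 * k) → ℝ),
      Set.BijOn T (latticeSet (Fin (2 * k + 1))) (intLat (Fin (2 * k))) ∧
      T '' polyG ((symCyc (2 * k + 1)).erase
          ((1 : Fin (2 * k + 1)), (0 : Fin (2 * k + 1)))) =
        convexHull ℝ (pseudoDelPezzoVerts (2 * k)) := by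
  refine ⟨Stmt16Aux.part1 hk, Stmt16Aux.Tmap k,
    ⟨Stmt16Aux.Tmap_mapsTo k, Stmt16Aux.Tmap_injOn k, Stmt16Aux.Tmap_surjOn hk⟩, ?_⟩
  rw [polyG, (Stmt16Aux.Tmap k).image_convexHull, Stmt16Aux.image_verts hk]
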